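/- Let q be a square. A subline PG(1, q) and a Baer subline PG(1, q√q) of PG(1, q^3) share at most a subline PG(1, √q), i.e., their intersection has at most √q + 1 points. -/

import Mathlib

open Polynomial

lemma aux_comp {K : Type*} [Field K] (N : (Fin 2 → K) ≃ₗ[K] (Fin 2 → K)) (z : Fin 2 → K)
    (j : Fin 2) :
    N z j = z 0 * N (Pi.single 0 1) j + z 1 * N (Pi.single 1 1) j := by
  have hz : z = z 0 • (Pi.single 0 1 : Fin 2 → K) + z 1 • (Pi.single 1 1 : Fin 2 → K) := by
    funext i; fin_cases i <;> simp
  conv_lhs => rw [hz]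
  simp [map_add, map_smul]

lemma aux_det {K : Type*} [Field K] (N : (Fin 2 → K) ≃ₗ[K] (Fin 2 → K)) :
    N (Pi.single 0 1) 0 * N (Pi.single 1 1) 1 - N (Pi.single 1 1) 0 * N (Pi.single 0 1) 1 ≠ 0 := by
  set α := N (Pi.single 0 1) 0 with hα
  set γ := N (Pi.single 0 1) 1 with hγ
  set β := N (Pi.single 1 1) 0 with hβ
  set δ := N (Pi.single 1 1) 1 with hδ
  intro h
  have h1 : N ![δ, -γ] = 0 := by
    funext j
    rw [aux_comp]
    fin_cases j
    · show ![δ, -γ] 0 * α + ![δ, -γ] 1 * β = 0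
      simp only [Matrix.cons_val_zero, Matrix.cons_val_one, Matrix.head_cons]
      linear_combination h
    · show ![δ, -γ] 0 * γ + ![δ, -γ] 1 * δ = 0
      simp only [Matrix.cons_val_zero, Matrix.cons_val_one, Matrix.head_cons]
      ring
  have h2 : (![δ, -γ] : Fin 2 → K) = 0 := by
    apply N.injective
    simpa using h1
  have hδ0 : δ = 0 := by simpa using congrFun h2 0
  have hγ0 : γ = 0 := by
    have := congrFun h2 1
    simpa using this
  have h3 : N ![β, -α] = 0 := by
    funext j
    rw [aux_comp]
    fin_cases j
    · show ![β, -α] 0 * α + ![β, -α] 1 * β = 0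
      simp only [Matrix.cons_val_zero, Matrix.cons_val_one, Matrix.head_cons]
      ring
    · show ![β, -α] 0 * γ + ![β, -α] 1 * δ = 0
      simp only [Matrix.cons_val_zero, Matrix.cons_val_one, Matrix.head_cons, hδ0, hγ0]
      ring
  have h4 : (![β, -α] : Fin 2 → K) = 0 := by
    apply N.injective; simpa using h3
  have hβ0 : β = 0 := by simpa using congrFun h4 0
  have hα0 : α = 0 := by
    have := congrFun h4 1
    simpa using this
  have h5 : N (Pi.single 0 1) = 0 := by
    funext j
    fin_cases j
    · show N (Pi.single 0 1) 0 = 0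
      rw [← hα, hα0]
    · show N (Pi.single 0 1) 1 = 0
      rw [← hγ, hγ0]
  have h6 : (Pi.single 0 1 : Fin 2 → K) = 0 := by
    apply N.injective; simpa using h5
  have := congrFun h6 0
  simp at this
lemma aux_sigma (K : Type*) [Field K] [Fintype K] (r : ℕ) (hK : Fintype.card K = r ^ 6) :
    ∃ (σ : K →+* K), ∀ x : K, σ x = x ^ r ^ 3 := by
  set p := ringChar K with hpdef
  obtain ⟨n, hp, hcard⟩ := FiniteField.card K p
  have hdvd : r ∣ p ^ (n:ℕ) := by
    rw [← hcard, hK]; exact dvd_pow_self r (by norm_num)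
  obtain ⟨m, hm, hrm⟩ := (Nat.dvd_prime_pow hp).mp hdvd
  haveI : ExpChar K p := ExpChar.prime hp
  refine ⟨iterateFrobenius K p (3*m), fun x => ?_⟩
  rw [iterateFrobenius_def, hrm, ← pow_mul, Nat.mul_comm 3 m]

theorem stmt_12 (r : ℕ) (F E K : Type*) [Field F] [Fintype F] [Field E] [Fintype E]
    [Field K] [Fintype K] [Algebra F K] [Algebra E K]
    (hF : Fintype.card F = r ^ 2) (hE : Fintype.card E = r ^ 3)
    (hK : Fintype.card K = r ^ 6)
    (g₁ g₂ : (Fin 2 → K) ≃ₗ[K] (Fin 2 → K)) :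
    Nat.card {P : Submodule K (Fin 2 → K) //
        (∃ v : Fin 2 → F, v ≠ 0 ∧
          P = Submodule.span K {g₁ (fun i => algebraMap F K (v i))}) ∧
        (∃ w : Fin 2 → E, w ≠ 0 ∧
          P = Submodule.span K {g₂ (fun i => algebraMap E K (w i))})}
      ≤ r + 1 := by
  classical
  have hr2 : 2 ≤ r := by
    have h2 : 1 < Fintype.card F := Fintype.one_lt_card
    rw [hF] at h2
    by_contra h
    push_neg at h
    interval_cases r <;> simp_all
  obtain ⟨σ, hσ⟩ := aux_sigma K r hK
  have hσF : ∀ t : F, σ (algebraMap F K t) = (algebraMap F K t) ^ r := by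
    intro t
    have h1 : (algebraMap F K t) ^ (r^2) = algebraMap F K t := by
      rw [← map_pow, ← hF, FiniteField.pow_card]
    rw [hσ, show r^3 = r^2*r from by ring, pow_mul, h1]
  have hσE : ∀ w : E, σ (algebraMap E K w) = algebraMap E K w := by
    intro w; rw [hσ, ← map_pow, ← hE, FiniteField.pow_card]
  set N : (Fin 2 → K) ≃ₗ[K] (Fin 2 → K) := g₁.trans g₂.symm with hNdef
  set α := N (Pi.single 0 1) 0 with hα
  set γ := N (Pi.single 0 1) 1 with hγ
  set β := N (Pi.single 1 1) 0 with hβ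
  set δ := N (Pi.single 1 1) 1 with hδ
  have hdet : α * δ - β * γ ≠ 0 := aux_det N
  set pp : K[X] := (C α * X + C β) * (C (σ γ) * X ^ r + C (σ δ)) -
      (C (σ α) * X ^ r + C (σ β)) * (C γ * X + C δ) with hppdef
  have hpp : pp = C (α * σ γ - σ α * γ) * X^(r+1) + C (β * σ γ - σ α * δ) * X^r +
      C (α * σ δ - σ β * γ) * X^1 + C (β * σ δ - σ β * δ) := by
    simp only [hppdef, map_sub, map_mul]
    ring
  have heval : ∀ t : K, pp.eval t =
      (α*t+β) * (σ γ * t^r + σ δ) - (σ α * t^r + σ β) * (γ*t+δ) := by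
    intro t; simp [hppdef]

  have hr0 : (0:ℕ) ≠ r := by omega
  have hr1 : (1:ℕ) ≠ r := by omega
  have hrs : ¬ (r = r + 1) := by omega
  have hrs1 : ¬ (1 = r + 1) := by omega
  have hrs0 : ¬ (r + 1 = 0) := by omega
  have c4 : pp.coeff (r+1) = α * σ γ - σ α * γ := by
    rw [hpp]
    simp only [coeff_add, coeff_C_mul, coeff_X_pow, coeff_C]
    simp [show ¬(r + 1 = r) by omega, show ¬(r + 1 = 1) by omega, show ¬(r + 1 = 0) by omega, show ¬(r = 0) by omega]
  have c3 : pp.coeff r = β * σ γ - σ α * δ := by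
    rw [hpp]
    simp only [coeff_add, coeff_C_mul, coeff_X_pow, coeff_C]
    simp [show ¬(r = r + 1) by omega, show ¬(r = 1) by omega, show ¬(r = 0) by omega]
  have hdeg : pp.natDegree ≤ r + 1 := by
    rw [hpp]
    compute_degree
  have hpp0 : pp ≠ 0 := by
    intro h0
    have q4 : α * σ γ - σ α * γ = 0 := by rw [← c4, h0, coeff_zero]
    have q3 : β * σ γ - σ α * δ = 0 := by rw [← c3, h0, coeff_zero]
    apply hdet
    by_cases hγ0 : γ = 0
    · have hσγ : σ γ = 0 := by rw [hγ0, map_zero]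
      have h7 : σ α * δ = 0 := by linear_combination hσγ * β - q3
      rcases mul_eq_zero.mp h7 with h | h
      · have hα0 : α = 0 := by
          have := (_root_.map_eq_zero σ).mp h
          exact this
        rw [hα0, hγ0]; ring
      · rw [h, hγ0]; ring
    · have h5 : σ γ * (β * γ - α * δ) = 0 := by linear_combination γ * q3 - δ * q4
      have hσγ : σ γ ≠ 0 := fun h => hγ0 ((_root_.map_eq_zero σ).mp h)
      have h6 := (mul_eq_zero.mp h5).resolve_left hσγ
      linear_combination -h6
  have main : ∀ P : Submodule K (Fin 2 → K),
      ((∃ v : Fin 2 → F, v ≠ 0 ∧ P = Submodule.span K {g₁ (fun i => algebraMap F K (v i))}) ∧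
       (∃ w : Fin 2 → E, w ≠ 0 ∧ P = Submodule.span K {g₂ (fun i => algebraMap E K (w i))})) →
      (∃ t : K, pp.eval t = 0 ∧ P = Submodule.span K {g₁ ![t, 1]}) ∨
      ((α * σ γ - σ α * γ = 0) ∧ P = Submodule.span K {g₁ ![1, 0]}) := by
    rintro P ⟨⟨v, hv0, hPv⟩, ⟨w, hw0, hPw⟩⟩
    set x0 := algebraMap F K (v 0) with hx0def
    set x1 := algebraMap F K (v 1) with hx1def
    have hmem : g₁ (fun i => algebraMap F K (v i)) ∈
        Submodule.span K {g₂ (fun i => algebraMap E K (w i))} := by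
      rw [← hPw, hPv]; exact Submodule.mem_span_singleton_self _
    obtain ⟨lam, hlam⟩ := Submodule.mem_span_singleton.mp hmem
    have hNlam : N (fun i => algebraMap F K (v i)) = lam • (fun i => algebraMap E K (w i)) := by
      have h := congrArg g₂.symm hlam
      rw [map_smul, g₂.symm_apply_apply] at h
      rw [hNdef]
      simpa [LinearEquiv.trans_apply] using h.symm
    have hcomp0 : N (fun i => algebraMap F K (v i)) 0 = x0 * α + x1 * β := by
      simpa using aux_comp N (fun i => algebraMap F K (v i)) 0
    have hcomp1 : N (fun i => algebraMap F K (v i)) 1 = x0 * γ + x1 * δ := by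
      simpa using aux_comp N (fun i => algebraMap F K (v i)) 1
    have e1 : x0 * α + x1 * β = lam * algebraMap E K (w 0) := by
      rw [← hcomp0, hNlam]; simp
    have e2 : x0 * γ + x1 * δ = lam * algebraMap E K (w 1) := by
      rw [← hcomp1, hNlam]; simp
    have hσ0 : σ x0 = x0 ^ r := hσF (v 0)
    have hσ1 : σ x1 = x1 ^ r := hσF (v 1)
    have hdagger : (x0*α + x1*β) * (x0^r * σ γ + x1^r * σ δ) =
        (x0^r * σ α + x1^r * σ β) * (x0*γ + x1*δ) := by
      have hA' : σ (x0*α + x1*β) = x0^r * σ α + x1^r * σ β := by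
        rw [map_add, map_mul, map_mul, hσ0, hσ1]
      have hB' : σ (x0*γ + x1*δ) = x0^r * σ γ + x1^r * σ δ := by
        rw [map_add, map_mul, map_mul, hσ0, hσ1]
      rw [← hA', ← hB', e1, e2, map_mul, map_mul, hσE, hσE]
      ring
    by_cases h1 : v 1 = 0
    · right
      have h0 : v 0 ≠ 0 := by
        intro h0
        apply hv0
        funext i
        fin_cases i
        · exact h0
        · exact h1
      have hx0ne : x0 ≠ 0 := by
        rw [hx0def]; simpa using h0
      have hx1z : x1 = 0 := by rw [hx1def, h1, map_zero]
      constructor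
      · have hc : x0^(r+1) * (α * σ γ - σ α * γ) = 0 := by
          rw [hx1z] at hdagger
          have h0r : (0:K)^r = 0 := zero_pow (by omega)
          rw [h0r] at hdagger
          linear_combination hdagger
        rcases mul_eq_zero.mp hc with h | h
        · exact absurd h (pow_ne_zero _ hx0ne)
        · exact h
      · have hvec : (fun i => algebraMap F K (v i)) = x0 • ![(1:K), 0] := by
          funext i
          fin_cases i
          · show x0 = x0 • ![(1:K), 0] 0
            simp
          · show x1 = x0 • ![(1:K), 0] 1
            simp [hx1z]
        rw [hPv, hvec, map_smul, Submodule.span_singleton_smul_eq (IsUnit.mk0 _ hx0ne)]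
    · left
      have hx1ne : x1 ≠ 0 := by rw [hx1def]; simpa using h1
      refine ⟨x0 * x1⁻¹, ?_, ?_⟩
      · have key : x1^(r+1) * pp.eval (x0 * x1⁻¹) = 0 := by
          rw [heval]
          have ht : x0 = (x0 * x1⁻¹) * x1 := by field_simp
          rw [ht] at hdagger
          linear_combination hdagger
        rcases mul_eq_zero.mp key with h | h
        · exact absurd h (pow_ne_zero _ hx1ne)
        · exact h
      · have hvec : (fun i => algebraMap F K (v i)) = x1 • ![x0 * x1⁻¹, (1:K)] := by
          funext i
          fin_cases i
          · show x0 = x1 • ![x0 * x1⁻¹, (1:K)] 0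
            simp
            field_simp
          · show x1 = x1 • ![x0 * x1⁻¹, (1:K)] 1
            simp
        rw [hPv, hvec, map_smul, Submodule.span_singleton_smul_eq (IsUnit.mk0 _ hx1ne)]
  set S : Set (Submodule K (Fin 2 → K)) := {P | (∃ v : Fin 2 → F, v ≠ 0 ∧
      P = Submodule.span K {g₁ (fun i => algebraMap F K (v i))}) ∧
      (∃ w : Fin 2 → E, w ≠ 0 ∧
      P = Submodule.span K {g₂ (fun i => algebraMap E K (w i))})} with hSdef
  have hstart : Nat.card {P : Submodule K (Fin 2 → K) //
        (∃ v : Fin 2 → F, v ≠ 0 ∧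
          P = Submodule.span K {g₁ (fun i => algebraMap F K (v i))}) ∧
        (∃ w : Fin 2 → E, w ≠ 0 ∧
          P = Submodule.span K {g₂ (fun i => algebraMap E K (w i))})} = S.ncard :=
    Nat.card_coe_set_eq S
  rw [hstart]
  have hTcard : pp.roots.toFinset.card ≤ pp.natDegree :=
    (Multiset.toFinset_card_le pp.roots).trans (Polynomial.card_roots' pp)
  by_cases hc : α * σ γ - σ α * γ = 0
  · have hdeg' : pp.natDegree ≤ r := by
      by_contra hcon
      have hdeq : pp.natDegree = r + 1 :=
        Nat.le_antisymm hdeg (Nat.succ_le_of_lt (Nat.lt_of_not_le hcon))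
      have hlc := Polynomial.leadingCoeff_ne_zero.mpr hpp0
      unfold Polynomial.leadingCoeff at hlc
      rw [hdeq, c4] at hlc
      exact hlc hc
    have hsub : S ⊆ (fun t : K => Submodule.span K {g₁ ![t, (1:K)]}) ''
        (pp.roots.toFinset : Set K) ∪ {Submodule.span K {g₁ ![(1:K), 0]}} := by
      rintro P hP
      rcases main P hP with ⟨t, hroot, hPt⟩ | ⟨_, hPt⟩
      · exact Or.inl ⟨t, by simp [Multiset.mem_toFinset, mem_roots hpp0, IsRoot.def, hroot], hPt.symm⟩
      · exact Or.inr (by simp [hPt])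
    have hfin : ((fun t : K => Submodule.span K {g₁ ![t, (1:K)]}) ''
        (pp.roots.toFinset : Set K) ∪ {Submodule.span K {g₁ ![(1:K), 0]}}).Finite :=
      ((pp.roots.toFinset.finite_toSet).image _).union (Set.finite_singleton _)
    calc S.ncard ≤ _ := Set.ncard_le_ncard hsub hfin
      _ ≤ ((fun t : K => Submodule.span K {g₁ ![t, (1:K)]}) ''
            (pp.roots.toFinset : Set K)).ncard +
          ({Submodule.span K {g₁ ![(1:K), 0]}} : Set (Submodule K (Fin 2 → K))).ncard :=
        Set.ncard_union_le _ _
      _ ≤ pp.roots.toFinset.card + 1 := by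
        refine add_le_add ?_ (le_of_eq (Set.ncard_singleton _))
        refine le_trans (Set.ncard_image_le (pp.roots.toFinset.finite_toSet)) ?_
        rw [Set.ncard_coe_finset]
      _ ≤ r + 1 := Nat.add_le_add_right (hTcard.trans hdeg') 1
  · have hsub : S ⊆ (fun t : K => Submodule.span K {g₁ ![t, (1:K)]}) ''
        (pp.roots.toFinset : Set K) := by
      rintro P hP
      rcases main P hP with ⟨t, hroot, hPt⟩ | ⟨hcz, hPt⟩
      · exact ⟨t, by simp [Multiset.mem_toFinset, mem_roots hpp0, IsRoot.def, hroot], hPt.symm⟩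
      · exact absurd hcz hc
    calc S.ncard ≤ _ := Set.ncard_le_ncard hsub ((pp.roots.toFinset.finite_toSet).image _)
      _ ≤ pp.roots.toFinset.card := by
        refine le_trans (Set.ncard_image_le (pp.roots.toFinset.finite_toSet)) ?_
        rw [Set.ncard_coe_finset]
      _ ≤ r + 1 := hTcard.trans hdeg
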